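/- Let A be a commutative unital C*-algebra, let a, b ∈ A, define P(z) = (z - a)(z - b) and P'(z) = 2z - (a + b) for z ∈ A, and let c = (a + b)/2. Then for every z ∈ A, ‖P(z) - P(c)‖ ≤ (1/2) · ‖z - c‖ · ‖P'(z)‖. Equivalently, if z is not a critical point of P (i.e. P'(z) ≠ 0, so z ≠ c), then ‖P(z) - P(c)‖ / ‖z - c‖ ≤ ((2-1)/2) · ‖P'(z)‖; hence the C*-algebraic Smale mean value conjecture holds for degree 2 polynomials with the conjectured constant (deg P - 1)/deg P = 1/2. -/
import Mathlib


/-- **C*-algebraic Smale mean value conjecture in degree 2.**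
For `P(z) = (z-a)(z-b)` over a commutative unital C*-algebra, with derivative
`P'(z) = 2z - (a+b)` and critical point `c = (a+b)/2`, one has
`‖P(z)-P(c)‖ ≤ (1/2) ‖z-c‖ ‖P'(z)‖` for every `z`; equivalently, whenever `z` is not a
critical point of `P`, `‖P(z)-P(c)‖/‖z-c‖ ≤ ((2-1)/2) ‖P'(z)‖`. -/
theorem degree_two_smale {A : Type*} [NormedCommRing A] [StarRing A]
    [CStarRing A] [CompleteSpace A] [NormedAlgebra ℂ A] [StarModule ℂ A]
    (a b : A) (P P' : A → A)
    (hP : ∀ z, P z = (z - a) * (z - b))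
    (hP' : ∀ z, P' z = 2 * z - (a + b))
    (c : A) (hc : c = (1 / 2 : ℂ) • (a + b)) (z : A) :
    ‖P z - P c‖ ≤ (1 / 2) * ‖z - c‖ * ‖P' z‖
    ∧ (P' z ≠ 0 → ‖P z - P c‖ / ‖z - c‖ ≤ ((2 - 1) / 2 : ℝ) * ‖P' z‖) := by
  have hab : a + b = c + c := by
    rw [hc, ← add_smul]
    norm_num
  have h1 : P z - P c = (z - c) * (z - c) := by
    rw [hP, hP]
    linear_combination (c - z) * hab
  have h2 : P' z = (2 : ℂ) • (z - c) := by
    have : (2 : ℂ) • (z - c) = (z - c) + (z - c) := two_smul ℂ _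
    rw [hP', this]
    linear_combination -hab
  have hn2 : ‖P' z‖ = 2 * ‖z - c‖ := by
    rw [h2, norm_smul]
    norm_num
  have hmain : ‖P z - P c‖ ≤ (1 / 2) * ‖z - c‖ * ‖P' z‖ := by
    rw [h1, hn2]
    have := norm_mul_le (z - c) (z - c)
    nlinarith [norm_nonneg (z - c)]
  refine ⟨hmain, fun hne => ?_⟩
  have hzc : z ≠ c := by
    intro h
    apply hne
    rw [h2, h, sub_self, smul_zero]
  have hpos : 0 < ‖z - c‖ := by
    rw [norm_pos_iff]
    exact sub_ne_zero.mpr hzc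
  rw [div_le_iff₀ hpos]
  calc ‖P z - P c‖ ≤ (1 / 2) * ‖z - c‖ * ‖P' z‖ := hmain
    _ = (2 - 1) / 2 * ‖P' z‖ * ‖z - c‖ := by ring
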